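/- For any two distinct strings x, y over Σ and any letter λ ∈ Σ: x ≺ y in V-order if and only if λx ≺ λy (where λx denotes x with the letter λ prepended at the left end). -/

import Mathlib

variable {α : Type*} [LinearOrder α]

/-- The star operation on strings: delete the letter `x_h`, where `h` is the
start of the longest non-decreasing suffix (so `h = 1` iff the whole string is
non-decreasing, and otherwise `x_{h-1} > x_h ≤ x_{h+1} ≤ ⋯ ≤ x_n`). -/
def vstar : List α → List α
  | [] => []
  | a :: t => if List.IsChain (· ≤ ·) (a :: t) then t else a :: vstar t

/-- V-order `≺` between distinct strings `x`, `y`: either `x` lies on the path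
`y, y*, y^{2*}, …, ε`, or (if neither lies on the path of the other) taking the
least `s, t` with `x^{(s+1)*} = y^{(t+1)*}` and the greatest position `j` at
which `s = x^{s*}` and `t = y^{t*}` differ, the letter of `x^{s*}` at `j` is
smaller than that of `y^{t*}`. -/
def VLess (x y : List α) : Prop :=
  (∃ k : ℕ, 0 < k ∧ vstar^[k] y = x) ∨
  ((¬ ∃ k : ℕ, vstar^[k] y = x) ∧ (¬ ∃ k : ℕ, vstar^[k] x = y) ∧
    ∃ s t : ℕ,
      vstar^[s + 1] x = vstar^[t + 1] y ∧
      (∀ s' t' : ℕ, vstar^[s' + 1] x = vstar^[t' + 1] y → s ≤ s' ∧ t ≤ t') ∧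
      ∃ j : ℕ, j < (vstar^[s] x).length ∧
        (∀ j' : ℕ, j < j' → (vstar^[s] x)[j']? = (vstar^[t] y)[j']?) ∧
        ∃ a b : α, (vstar^[s] x)[j]? = some a ∧ (vstar^[t] y)[j]? = some b ∧
          a < b)

section VLessProofs
variable {α : Type*} [LinearOrder α]


lemma vstar_nil : vstar ([] : List α) = [] := rfl

lemma vstar_cons (a : α) (t : List α) :
    vstar (a :: t) = if List.IsChain (· ≤ ·) (a :: t) then t else a :: vstar t := rfl

lemma vstar_of_chain' {l : List α} (h : List.IsChain (· ≤ ·) l) : vstar l = l.tail := by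
  cases l with
  | nil => rfl
  | cons a t => rw [vstar_cons, if_pos h]; rfl

lemma vstar_cons_of_not {a : α} {t : List α} (h : ¬ List.IsChain (· ≤ ·) (a :: t)) :
    vstar (a :: t) = a :: vstar t := by rw [vstar_cons, if_neg h]

lemma length_vstar (l : List α) : (vstar l).length = l.length - 1 := by
  induction l with
  | nil => rfl
  | cons a t ih =>
    rw [vstar_cons]
    split
    · simp
    · rename_i h
      have ht : t ≠ [] := by rintro rfl; exact h (List.isChain_singleton a)
      have : 1 ≤ t.length := by
        cases t with | nil => exact absurd rfl ht | cons b u => simp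
      simp only [List.length_cons, ih]
      omega

lemma length_iter (k : ℕ) (l : List α) : (vstar^[k] l).length = l.length - k := by
  induction k with
  | zero => simp
  | succ k ih => rw [Function.iterate_succ_apply', length_vstar, ih]; omega

lemma iter_eq_nil_iff {k : ℕ} {l : List α} : vstar^[k] l = [] ↔ l.length ≤ k := by
  rw [← List.length_eq_zero_iff, length_iter]; omega

lemma iter_nil (k : ℕ) : vstar^[k] ([] : List α) = [] := by
  rw [iter_eq_nil_iff]; simp

lemma chain'_cons_iff (a : α) (l : List α) :
    List.IsChain (· ≤ ·) (a :: l) ↔ List.IsChain (· ≤ ·) l ∧ ∀ c ∈ l, a ≤ c := by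
  rw [List.isChain_iff_pairwise, List.pairwise_cons, List.isChain_iff_pairwise]
  tauto

lemma chain'_cons_vstar {a : α} {l : List α} (h : List.IsChain (· ≤ ·) (a :: l)) :
    List.IsChain (· ≤ ·) (a :: vstar l) := by
  rw [chain'_cons_iff] at h
  rw [vstar_of_chain' h.1, chain'_cons_iff]
  exact ⟨h.1.tail, fun c hc => h.2 c (List.mem_of_mem_tail hc)⟩

section
variable (lam : α) (x : List α)

lemma exists_thresh : ∃ a : ℕ, List.IsChain (· ≤ ·) (lam :: vstar^[a] x) ∧
    ∀ i < a, ¬ List.IsChain (· ≤ ·) (lam :: vstar^[i] x) := by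
  classical
  have hex : ∃ i, List.IsChain (· ≤ ·) (lam :: vstar^[i] x) :=
    ⟨x.length, by rw [iter_eq_nil_iff.2 le_rfl]; exact List.isChain_singleton lam⟩
  exact ⟨Nat.find hex, Nat.find_spec hex, fun i hi => Nat.find_min hex hi⟩

variable {lam x}

lemma chain'_iter_mono {a : ℕ} (hc : List.IsChain (· ≤ ·) (lam :: vstar^[a] x)) :
    ∀ k, a ≤ k → List.IsChain (· ≤ ·) (lam :: vstar^[k] x) := by
  intro k hk
  obtain ⟨d, rfl⟩ : ∃ d, k = a + d := ⟨k - a, by omega⟩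
  induction d with
  | zero => exact hc
  | succ d ih =>
    have := chain'_cons_vstar (ih (by omega))
    rwa [← Function.iterate_succ_apply' vstar (a + d) x] at this

lemma iter_cons_low {a : ℕ}
    (hmin : ∀ i < a, ¬ List.IsChain (· ≤ ·) (lam :: vstar^[i] x)) :
    ∀ k, k ≤ a → vstar^[k] (lam :: x) = lam :: vstar^[k] x := by
  intro k
  induction k with
  | zero => intro _; rfl
  | succ k ih =>
    intro hk
    rw [Function.iterate_succ_apply', ih (by omega),
      vstar_cons_of_not (hmin k (by omega))]
    rw [← Function.iterate_succ_apply' vstar k x]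

lemma iter_cons_high {a : ℕ}
    (hmin : ∀ i < a, ¬ List.IsChain (· ≤ ·) (lam :: vstar^[i] x))
    (hc : List.IsChain (· ≤ ·) (lam :: vstar^[a] x)) :
    ∀ k, a ≤ k → vstar^[k + 1] (lam :: x) = vstar^[k] x := by
  have base : vstar^[a + 1] (lam :: x) = vstar^[a] x := by
    rw [Function.iterate_succ_apply', iter_cons_low hmin a le_rfl, vstar_of_chain' hc]
    rfl
  intro k hk
  obtain ⟨d, rfl⟩ : ∃ d, k = d + a := ⟨k - a, by omega⟩
  have e : d + a + 1 = d + (a + 1) := by omega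
  rw [e, Function.iterate_add_apply, base, ← Function.iterate_add_apply]

end

/-- Among two distinct preimages of `M` under `vstar`, if `hp :: M` (the insertion at
position 0, which is a chain) is V-smaller than `Q` at the last differing position,
then `Q` is also an insertion at position 0 with a larger letter. -/
lemma lemmaW : ∀ (Q M : List α) (hp : α) (j : ℕ),
    List.IsChain (· ≤ ·) (hp :: M) → vstar Q = M → Q ≠ [] →
    (∀ j' : ℕ, j < j' → (hp :: M)[j']? = Q[j']?) →
    ∀ a b : α, (hp :: M)[j]? = some a → Q[j]? = some b → a < b →
    List.IsChain (· ≤ ·) Q ∧ ∃ q, Q = q :: M ∧ hp < q := by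
  intro Q
  induction Q with
  | nil => intro M hp j _ _ h; exact absurd rfl h
  | cons q Q' ih =>
    intro M hp j hchP hvQ _ htail a b ha hb hab
    by_cases hcQ : List.IsChain (· ≤ ·) (q :: Q')
    · -- Q = q :: Q' is a chain, so M = Q'
      have hM : M = Q' := by rw [vstar_of_chain' hcQ] at hvQ; exact hvQ.symm
      subst hM
      cases j with
      | zero =>
        simp only [List.getElem?_cons_zero, Option.some.injEq] at ha hb
        subst ha; subst hb
        exact ⟨hcQ, q, rfl, hab⟩
      | succ j' =>
        rw [List.getElem?_cons_succ] at ha hb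
        rw [ha] at hb
        exact absurd (Option.some.injEq _ _ ▸ hb) (ne_of_lt hab)
    · -- Q not a chain: vstar Q = q :: vstar Q'
      exfalso
      have hQ'ne : Q' ≠ [] := by rintro rfl; exact hcQ (List.isChain_singleton q)
      have hvQ' : M = q :: vstar Q' := by rw [vstar_cons_of_not hcQ] at hvQ; exact hvQ.symm
      set M' := vstar Q' with hM'
      subst hvQ'
      -- now hchP : Chain' (hp :: q :: M')
      cases j with
      | zero =>
        -- tails equal everywhere: q :: M' = Q'
        have hQ'eq : Q' = q :: M' := by
          apply List.ext_getElem?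
          intro n
          have := htail (n+1) (by omega)
          rw [List.getElem?_cons_succ, List.getElem?_cons_succ] at this
          exact this.symm
        -- then q :: Q' is a chain, contradiction
        apply hcQ
        rw [hQ'eq, chain'_cons_iff]
        have hqM' : List.IsChain (· ≤ ·) (q :: M') := ((chain'_cons_iff _ _).1 hchP).1
        refine ⟨hqM', fun c hc => ?_⟩
        rcases List.mem_cons.1 hc with rfl | hc
        · exact le_rfl
        · exact ((chain'_cons_iff _ _).1 hqM').2 c hc
      | succ j' =>
        have hch' : List.IsChain (· ≤ ·) (q :: M') := ((chain'_cons_iff _ _).1 hchP).1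
        have htail' : ∀ j'' : ℕ, j' < j'' → (q :: M')[j'']? = Q'[j'']? := by
          intro j'' hj''
          have := htail (j'' + 1) (by omega)
          rwa [List.getElem?_cons_succ, List.getElem?_cons_succ] at this
        rw [List.getElem?_cons_succ] at ha hb
        obtain ⟨hcQ', q', hQ'd, hqq'⟩ := ih M' q j' hch' rfl hQ'ne htail' a b ha hb hab
        rw [hQ'd] at hcQ'
        apply hcQ
        rw [hQ'd, chain'_cons_iff]
        refine ⟨hcQ', fun c hc => ?_⟩
        rcases List.mem_cons.1 hc with rfl | hc
        · exact le_of_lt hqq'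
        · exact le_trans (le_of_lt hqq') (((chain'_cons_iff _ _).1 hcQ').2 c hc)

lemma vless_asymm (x y : List α) (hxy : x ≠ y) (h1 : VLess x y) (h2 : VLess y x) : False := by
  rcases h1 with ⟨k, hk, hky⟩ | ⟨hn1, hn2, _⟩
  · rcases h2 with ⟨m, hm, hmx⟩ | ⟨hn1', hn2', _⟩
    · have hyne : y ≠ [] := by
        rintro rfl; rw [iter_nil] at hky; subst hky; rw [iter_nil] at hmx; exact hxy hmx.symm
      have hxne : x ≠ [] := by
        rintro rfl; rw [iter_nil] at hmx; subst hmx; exact hxy rfl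
      have l1 := length_iter k y
      have l2 := length_iter m x
      rw [hky] at l1; rw [hmx] at l2
      have : 1 ≤ x.length := List.length_pos_iff.2 hxne
      have : 1 ≤ y.length := List.length_pos_iff.2 hyne
      omega
    · exact hn2' ⟨k, hky⟩
  · rename_i hrest
    rcases h2 with ⟨m, hm, hmx⟩ | ⟨hn1', hn2', hsol⟩
    · exact hn2 ⟨m, hmx⟩
    · obtain ⟨s, t, heq, hmin, j, hjl, htail, a, b, ha, hb, hab⟩ := hrest
      obtain ⟨s2, t2, heq2, hmin2, j2, hjl2, htail2, a2, b2, ha2, hb2, hab2⟩ := hsol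
      obtain ⟨hs2t, ht2s⟩ := hmin2 t s heq.symm
      obtain ⟨hst2, hts2⟩ := hmin t2 s2 heq2.symm
      have e1 : s2 = t := le_antisymm hs2t hts2
      have e2 : t2 = s := le_antisymm ht2s hst2
      subst e1; subst e2
      rcases lt_trichotomy j j2 with hj | hj | hj
      · have := htail j2 hj
        rw [ha2, hb2] at this
        exact absurd (Option.some.injEq _ _ ▸ this) (ne_of_gt hab2)
      · subst hj
        rw [ha] at hb2; rw [hb] at ha2
        have eb : b = a2 := by injection ha2
        have ea : a = b2 := by injection hb2
        subst eb; subst ea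
        exact absurd (lt_trans hab hab2) (lt_irrefl _)
      · have := htail2 j hj
        rw [ha, hb] at this
        exact absurd (Option.some.injEq _ _ ▸ this).symm (ne_of_lt hab)

lemma vless_total (x y : List α) (hxy : x ≠ y) : VLess x y ∨ VLess y x := by
  classical
  by_cases h1 : ∃ k, vstar^[k] y = x
  · left; left
    obtain ⟨k, hk⟩ := h1
    refine ⟨k, ?_, hk⟩
    rcases Nat.eq_zero_or_pos k with rfl | h
    · exact absurd hk.symm hxy
    · exact h
  by_cases h2 : ∃ k, vstar^[k] x = y
  · right; left
    obtain ⟨k, hk⟩ := h2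
    refine ⟨k, ?_, hk⟩
    rcases Nat.eq_zero_or_pos k with rfl | h
    · exact absurd hk.symm (Ne.symm hxy)
    · exact h
  · have hxne : x ≠ [] := by rintro rfl; exact h1 ⟨y.length, iter_eq_nil_iff.2 le_rfl⟩
    have hyne : y ≠ [] := by rintro rfl; exact h2 ⟨x.length, iter_eq_nil_iff.2 le_rfl⟩
    have hxl : 1 ≤ x.length := List.length_pos_iff.2 hxne
    have hyl : 1 ≤ y.length := List.length_pos_iff.2 hyne
    -- solutions exist
    have hsolex : ∃ s, ∃ t, vstar^[s + 1] x = vstar^[t + 1] y := by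
      refine ⟨x.length - 1, y.length - 1, ?_⟩
      rw [iter_eq_nil_iff.2 (by omega : x.length ≤ x.length - 1 + 1),
        iter_eq_nil_iff.2 (by omega : y.length ≤ y.length - 1 + 1)]
    have hsolex' : ∃ t, ∃ s, vstar^[s + 1] x = vstar^[t + 1] y := by
      obtain ⟨s, t, h⟩ := hsolex; exact ⟨t, s, h⟩
    set smin := Nat.find hsolex with hsmin
    set tmin := Nat.find hsolex' with htmin
    obtain ⟨t1, hsol1⟩ := Nat.find_spec hsolex
    obtain ⟨s2, hsol2⟩ := Nat.find_spec hsolex'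
    have hminS : ∀ s' t', vstar^[s' + 1] x = vstar^[t' + 1] y → smin ≤ s' :=
      fun s' t' h => Nat.find_min' hsolex ⟨t', h⟩
    have hminT : ∀ s' t', vstar^[s' + 1] x = vstar^[t' + 1] y → tmin ≤ t' :=
      fun s' t' h => Nat.find_min' hsolex' ⟨s', h⟩
    have hss : smin ≤ s2 := hminS s2 tmin hsol2
    have htt : tmin ≤ t1 := hminT smin t1 hsol1
    -- diagonal argument: (smin, tmin) is a solution
    have hsol : vstar^[smin + 1] x = vstar^[tmin + 1] y := by
      rcases Nat.eq_zero_or_pos ((t1 - tmin) + (s2 - smin)) with hd | hd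
      · have e1 : s2 = smin := by omega
        have e2 : t1 = tmin := by omega
        rw [← e2]; exact hsol1
      · -- vstar^[tmin+1] y is periodic, hence []
        have key : vstar^[s2 + 1] x = vstar^[(s2 - smin) + (t1 + 1)] y := by
          have e : s2 + 1 = (s2 - smin) + (smin + 1) := by omega
          rw [e, Function.iterate_add_apply, hsol1, ← Function.iterate_add_apply]
        rw [hsol2] at key
        have lkey := congrArg List.length key
        rw [length_iter, length_iter] at lkey
        have hynil : vstar^[tmin + 1] y = [] := by rw [iter_eq_nil_iff]; omega
        have hynil2 : vstar^[t1 + 1] y = [] := by rw [iter_eq_nil_iff]; rw [iter_eq_nil_iff] at hynil; omega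
        rw [hynil]
        rw [hynil2] at hsol1
        exact hsol1
    -- P and Q
    set P := vstar^[smin] x with hP
    set Q := vstar^[tmin] y with hQ
    have hvPQ : vstar P = vstar Q := by
      rw [hP, hQ, ← Function.iterate_succ_apply' vstar smin x,
        ← Function.iterate_succ_apply' vstar tmin y]
      exact hsol
    have hPne : P ≠ [] := by
      intro hp
      have hsl : x.length ≤ smin := by rw [hP] at hp; exact iter_eq_nil_iff.1 hp
      have : vstar^[(smin - 1) + 1] x = vstar^[(y.length - 1) + 1] y := by
        rw [iter_eq_nil_iff.2 (by omega : x.length ≤ smin - 1 + 1),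
          iter_eq_nil_iff.2 (by omega : y.length ≤ y.length - 1 + 1)]
      have := hminS _ _ this
      omega
    have hQne : Q ≠ [] := by
      intro hq
      have htl : y.length ≤ tmin := by rw [hQ] at hq; exact iter_eq_nil_iff.1 hq
      have : vstar^[(x.length - 1) + 1] x = vstar^[(tmin - 1) + 1] y := by
        rw [iter_eq_nil_iff.2 (by omega : x.length ≤ x.length - 1 + 1),
          iter_eq_nil_iff.2 (by omega : y.length ≤ tmin - 1 + 1)]
      have := hminT _ _ this
      omega
    have hPQlen : P.length = Q.length := by
      have := congrArg List.length hvPQ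
      rw [length_vstar, length_vstar] at this
      have : 1 ≤ P.length := List.length_pos_iff.2 hPne
      have : 1 ≤ Q.length := List.length_pos_iff.2 hQne
      omega
    have hPQ : P ≠ Q := by
      intro hpq
      have hpq' : vstar^[smin] x = vstar^[tmin] y := by rw [← hP, ← hQ]; exact hpq
      rcases Nat.eq_zero_or_pos smin with hs0 | hs0
      · rcases Nat.eq_zero_or_pos tmin with ht0 | ht0
        · rw [hs0, ht0] at hpq'; simp at hpq'; exact hxy hpq'
        · apply h1
          rw [hs0] at hpq'; simp at hpq'
          exact ⟨tmin, hpq'.symm⟩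
      · rcases Nat.eq_zero_or_pos tmin with ht0 | ht0
        · apply h2
          rw [ht0] at hpq'; simp at hpq'
          exact ⟨smin, hpq'⟩
        · have : vstar^[(smin - 1) + 1] x = vstar^[(tmin - 1) + 1] y := by
            have e1 : smin - 1 + 1 = smin := by omega
            have e2 : tmin - 1 + 1 = tmin := by omega
            rw [e1, e2]; exact hpq'
          have := hminS _ _ this
          omega
    -- greatest differing index
    have hdiff : ∃ i : ℕ, P[i]? ≠ Q[i]? := by
      by_contra hc
      push_neg at hc
      exact hPQ (List.ext_getElem? hc)
    obtain ⟨i0, hi0⟩ := hdiff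
    have hi0b : i0 ≤ P.length := by
      by_contra hc
      apply hi0
      rw [List.getElem?_eq_none (by omega), List.getElem?_eq_none (by omega : Q.length ≤ i0)]
    set j := Nat.findGreatest (fun i : ℕ => P[i]? ≠ Q[i]?) P.length with hj
    have hjp : P[j]? ≠ Q[j]? := by
      have := Nat.findGreatest_spec (P := fun i : ℕ => P[i]? ≠ Q[i]?) hi0b hi0
      exact this
    have hjgr : ∀ j', j < j' → P[j']? = Q[j']? := by
      intro j' hj'
      by_cases hje : j' ≤ P.length
      · by_contra hc
        exact (Nat.findGreatest_is_greatest (P := fun i : ℕ => P[i]? ≠ Q[i]?) hj' hje) hc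
      · rw [List.getElem?_eq_none (by omega), List.getElem?_eq_none (by omega : Q.length ≤ j')]
    have hjlt : j < P.length := by
      by_contra hc
      apply hjp
      rw [List.getElem?_eq_none (by omega), List.getElem?_eq_none (by omega : Q.length ≤ j)]
    have hPj : ∃ a, P[j]? = some a := ⟨P[j]'hjlt, List.getElem?_eq_getElem hjlt⟩
    have hQj : ∃ b, Q[j]? = some b := ⟨Q[j]'(hPQlen ▸ hjlt), List.getElem?_eq_getElem _⟩
    obtain ⟨a, ha⟩ := hPj
    obtain ⟨b, hb⟩ := hQj
    have hab : a ≠ b := by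
      intro h; apply hjp; rw [ha, hb, h]
    rcases lt_or_gt_of_ne hab with hlt | hgt
    · left; right
      exact ⟨h1, h2, smin, tmin, hsol, fun s' t' h => ⟨hminS s' t' h, hminT s' t' h⟩,
        j, hjlt, hjgr, a, b, ha, hb, hlt⟩
    · right; right
      refine ⟨h2, h1, tmin, smin, hsol.symm,
        fun s' t' h => ⟨hminT t' s' h.symm, hminS t' s' h.symm⟩,
        j, by rw [← hQ, ← hPQlen]; exact hjlt, fun j' hj' => (hjgr j' hj').symm, b, a, hb, ha, hgt⟩

lemma cons_decomp {lam : α} {z : List α} (hc : List.IsChain (· ≤ ·) (lam :: z)) (hz : z ≠ []) :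
    ∃ c z', z = c :: z' ∧ vstar z = z' ∧ lam ≤ c := by
  obtain ⟨c, z', rfl⟩ := List.exists_cons_of_ne_nil hz
  refine ⟨c, z', rfl, ?_, ?_⟩
  · rw [vstar_of_chain' ((chain'_cons_iff _ _).1 hc).1]; rfl
  · exact ((chain'_cons_iff _ _).1 hc).2 c (by simp)

lemma vless_cons_forward (x y : List α) (lam : α) (hxy : x ≠ y) (h : VLess x y) :
    VLess (lam :: x) (lam :: y) := by
  obtain ⟨b, hcb, hbmin⟩ := exists_thresh lam y
  have hbm := chain'_iter_mono hcb
  have Ylow := iter_cons_low hbmin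
  have Yhigh := iter_cons_high hbmin hcb
  rcases h with ⟨k0, hk0, hky0⟩ | ⟨hny, hnx, hrest⟩
  · -- Case A : x is on the path of y
    have hyne : y ≠ [] := by
      rintro rfl
      rw [iter_nil] at hky0
      exact hxy hky0.symm
    have hyl : 1 ≤ y.length := List.length_pos_iff.2 hyne
    obtain ⟨k, hkpos, hkle, hky⟩ : ∃ k, 0 < k ∧ k ≤ y.length ∧ vstar^[k] y = x := by
      rcases le_or_gt k0 y.length with hc | hc
      · exact ⟨k0, hk0, hc, hky0⟩
      · refine ⟨y.length, hyl, le_rfl, ?_⟩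
        rw [iter_eq_nil_iff.2 le_rfl, ← hky0, iter_eq_nil_iff.2 (by omega)]
    have hxlen : x.length = y.length - k := by rw [← hky, length_iter]
    rcases le_or_gt k b with hkb | hbk
    · -- A1
      exact Or.inl ⟨k, hkpos, by rw [Ylow k hkb, hky]⟩
    · -- A2
      have hXchain : List.IsChain (· ≤ ·) (lam :: x) := by
        rw [← hky]; exact hbm k (le_of_lt hbk)
      have Xstep : ∀ m : ℕ, vstar^[m + 1] (lam :: x) = vstar^[m] x := by
        intro m
        rw [Function.iterate_succ_apply, vstar_of_chain' hXchain]; rfl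
      by_cases hA : ∃ i, vstar^[i] y = lam :: x
      · -- A2a
        obtain ⟨i, hi⟩ := hA
        have hlen := congrArg List.length hi
        rw [length_iter] at hlen
        simp only [List.length_cons] at hlen
        left
        refine ⟨i + 1, by omega, ?_⟩
        rw [Yhigh i (by omega), hi]
      · -- A2b
        right
        obtain ⟨m, rfl⟩ : ∃ m, k = m + 1 := ⟨k - 1, by omega⟩
        -- the element of y's path one step before x
        have hWstep : vstar^[m + 1] (lam :: y) = vstar^[m] y := Yhigh m (by omega)
        have hcW : List.IsChain (· ≤ ·) (lam :: vstar^[m] y) := hbm m (by omega)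
        have hWne : vstar^[m] y ≠ [] := by
          apply List.ne_nil_of_length_pos
          rw [length_iter]; omega
        obtain ⟨c, W', hWd, hWv, hlc⟩ := cons_decomp hcW hWne
        have hW'x : W' = x := by
          rw [← hWv, ← Function.iterate_succ_apply' vstar m y, hky]
        have hWd2 : vstar^[m] y = c :: x := by rw [hWd, hW'x]
        have hcx : lam < c := by
          rcases lt_or_eq_of_le hlc with h' | h'
          · exact h'
          · exact absurd ⟨m, by rw [hWd2, ← h']⟩ hA
        have n1 : ¬ ∃ n, vstar^[n] (lam :: y) = lam :: x := by
          rintro ⟨n, hm⟩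
          rcases le_or_gt n b with hmb | hbm'
          · rw [Ylow n hmb] at hm
            have h2 : vstar^[n] y = x := by injection hm
            have := congrArg List.length h2
            rw [length_iter] at this
            omega
          · obtain ⟨i, rfl⟩ : ∃ i, n = i + 1 := ⟨n - 1, by omega⟩
            rw [Yhigh i (by omega)] at hm
            exact hA ⟨i, hm⟩
        have n2 : ¬ ∃ n, vstar^[n] (lam :: x) = lam :: y := by
          rintro ⟨n, hm⟩
          have := congrArg List.length hm
          rw [length_iter] at this
          simp only [List.length_cons] at this
          omega
        refine ⟨n1, n2, 0, m + 1, ?_, ?_, 0, ?_, ?_, lam, c, ?_, ?_, hcx⟩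
        · rw [Xstep 0, Yhigh (m + 1) (by omega)]
          simpa using hky.symm
        · intro s' t' h'
          refine ⟨Nat.zero_le _, ?_⟩
          rw [Xstep s'] at h'
          rcases le_or_gt (t' + 1) b with htb | hbt
          · rw [Ylow (t' + 1) htb] at h'
            have := congrArg List.length h'
            rw [length_iter] at this
            simp only [List.length_cons, length_iter] at this
            omega
          · rw [Yhigh t' (by omega)] at h'
            have h2' : vstar^[s'] x = vstar^[(m + 1) + s'] y := by
              rw [← hky, ← Function.iterate_add_apply, Nat.add_comm]
            have hc2 : vstar^[t'] y = vstar^[(m + 1) + s'] y := by rw [← h', h2']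
            by_cases hnil : vstar^[t'] y = []
            · have := iter_eq_nil_iff.1 hnil; omega
            · have hl := congrArg List.length hc2
              rw [length_iter, length_iter] at hl
              have hplen : 0 < (vstar^[t'] y).length := List.length_pos_iff.2 hnil
              rw [length_iter] at hplen
              omega
        · simp
        · intro j' hj'
          rw [hWstep, hWd2]
          obtain ⟨j'', rfl⟩ : ∃ j'', j' = j'' + 1 := ⟨j' - 1, by omega⟩
          simp
        · simp
        · rw [hWstep, hWd2, List.getElem?_cons_zero]
  · -- Case B : comparison branch
    obtain ⟨s0, t0, heq0, hmin0, j0, hj0, htail0, a0, b0, ha0, hb0, hab0⟩ := hrest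
    have hxne : x ≠ [] := by rintro rfl; exact hny ⟨y.length, iter_eq_nil_iff.2 le_rfl⟩
    have hyne : y ≠ [] := by rintro rfl; exact hnx ⟨x.length, iter_eq_nil_iff.2 le_rfl⟩
    have hxl : 1 ≤ x.length := List.length_pos_iff.2 hxne
    have hyl : 1 ≤ y.length := List.length_pos_iff.2 hyne
    have hs0t0 : s0 ≤ x.length - 1 ∧ t0 ≤ y.length - 1 := by
      have h' : vstar^[(x.length - 1) + 1] x = vstar^[(y.length - 1) + 1] y := by
        rw [iter_eq_nil_iff.2 (by omega), iter_eq_nil_iff.2 (by omega)]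
      exact hmin0 _ _ h'
    obtain ⟨a, hca, hamin⟩ := exists_thresh lam x
    have ham := chain'_iter_mono hca
    have Xlow := iter_cons_low hamin
    have Xhigh := iter_cons_high hamin hca
    have H1 : ∀ s' t' : ℕ, vstar^[s'] x = vstar^[t'] y → s0 + 1 ≤ s' ∧ t0 + 1 ≤ t' := by
      intro s' t' h'
      match s', t' with
      | 0, t' => exact absurd ⟨t', by simpa using h'.symm⟩ hny
      | s' + 1, 0 => exact absurd ⟨s' + 1, by simpa using h'⟩ hnx
      | s' + 1, t' + 1 =>
        have := hmin0 s' t' h'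
        omega
    have n1 : ¬ ∃ n, vstar^[n] (lam :: y) = lam :: x := by
      rintro ⟨n, hm⟩
      rcases le_or_gt n b with hmb | hbm'
      · rw [Ylow n hmb] at hm
        exact hny ⟨n, by injection hm⟩
      · obtain ⟨i, rfl⟩ : ∃ i, n = i + 1 := ⟨n - 1, by omega⟩
        rw [Yhigh i (by omega)] at hm
        have hch : List.IsChain (· ≤ ·) (lam :: lam :: x) := by
          rw [← hm]; exact hbm i (by omega)
        have hch2 : List.IsChain (· ≤ ·) (lam :: x) := ((chain'_cons_iff _ _).1 hch).1
        refine hny ⟨i + 1, ?_⟩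
        rw [Function.iterate_succ_apply', hm, vstar_of_chain' hch2]
        rfl
    have n2 : ¬ ∃ n, vstar^[n] (lam :: x) = lam :: y := by
      rintro ⟨n, hm⟩
      rcases le_or_gt n a with hmb | hbm'
      · rw [Xlow n hmb] at hm
        exact hnx ⟨n, by injection hm⟩
      · obtain ⟨i, rfl⟩ : ∃ i, n = i + 1 := ⟨n - 1, by omega⟩
        rw [Xhigh i (by omega)] at hm
        have hch : List.IsChain (· ≤ ·) (lam :: lam :: y) := by
          rw [← hm]; exact ham i (by omega)
        have hch2 : List.IsChain (· ≤ ·) (lam :: y) := ((chain'_cons_iff _ _).1 hch).1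
        refine hnx ⟨i + 1, ?_⟩
        rw [Function.iterate_succ_apply', hm, vstar_of_chain' hch2]
        rfl
    have comboMin : ∀ s' t' : ℕ, vstar^[s' + 1] (lam :: x) = vstar^[t' + 1] (lam :: y) →
        (s' + 1 ≤ a ∧ t' + 1 ≤ b ∧ vstar^[s' + 1] x = vstar^[t' + 1] y) ∨
        (s' + 1 ≤ a ∧ b ≤ t' ∧ vstar^[t'] y = lam :: vstar^[s' + 1] x ∧
          vstar^[s' + 1] x = vstar^[t' + 1] y) ∨
        (a ≤ s' ∧ t' + 1 ≤ b ∧ vstar^[s'] x = lam :: vstar^[t' + 1] y ∧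
          vstar^[s' + 1] x = vstar^[t' + 1] y) ∨
        (a ≤ s' ∧ b ≤ t' ∧ vstar^[s'] x = vstar^[t'] y) := by
      intro s' t' h'
      rcases le_or_gt (s' + 1) a with hsa | hsa <;> rcases le_or_gt (t' + 1) b with htb | htb
      · left
        rw [Xlow _ hsa, Ylow _ htb] at h'
        exact ⟨hsa, htb, by injection h'⟩
      · right; left
        rw [Xlow _ hsa, Yhigh t' (by omega)] at h'
        have hZ : vstar^[t'] y = lam :: vstar^[s' + 1] x := h'.symm
        have hch : List.IsChain (· ≤ ·) (lam :: lam :: vstar^[s' + 1] x) := by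
          rw [← hZ]; exact hbm t' (by omega)
        have hch2 : List.IsChain (· ≤ ·) (lam :: vstar^[s' + 1] x) :=
          ((chain'_cons_iff _ _).1 hch).1
        refine ⟨hsa, by omega, hZ, ?_⟩
        rw [Function.iterate_succ_apply' vstar t' y, hZ, vstar_of_chain' hch2]
        rfl
      · right; right; left
        rw [Xhigh s' (by omega), Ylow _ htb] at h'
        have hch : List.IsChain (· ≤ ·) (lam :: lam :: vstar^[t' + 1] y) := by
          rw [← h']; exact ham s' (by omega)
        have hch2 : List.IsChain (· ≤ ·) (lam :: vstar^[t' + 1] y) :=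
          ((chain'_cons_iff _ _).1 hch).1
        refine ⟨by omega, htb, h', ?_⟩
        rw [Function.iterate_succ_apply' vstar s' x, h', vstar_of_chain' hch2]
        rfl
      · right; right; right
        rw [Xhigh s' (by omega), Yhigh t' (by omega)] at h'
        exact ⟨by omega, by omega, h'⟩
    have BND : ∀ s' t' : ℕ, vstar^[s' + 1] (lam :: x) = vstar^[t' + 1] (lam :: y) →
        s0 ≤ s' ∧ t0 ≤ t' := by
      intro s' t' h'
      rcases comboMin s' t' h' with ⟨_, _, hS⟩ | ⟨_, _, _, hS⟩ | ⟨_, _, _, hS⟩ | ⟨_, _, hS⟩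
      · exact hmin0 _ _ hS
      · exact hmin0 _ _ hS
      · exact hmin0 _ _ hS
      · have := H1 _ _ hS; omega
    rcases le_or_gt (s0 + 1) a with hcx | hcx
    · rcases le_or_gt (t0 + 1) b with hcy | hcy
      · -- G1 : both low
        right
        refine ⟨n1, n2, s0, t0, ?_, BND, j0 + 1, ?_, ?_, a0, b0, ?_, ?_, hab0⟩
        · rw [Xlow _ hcx, Ylow _ hcy, heq0]
        · rw [Xlow s0 (by omega)]
          simp only [List.length_cons]
          omega
        · intro j' hj'
          rw [Xlow s0 (by omega), Ylow t0 (by omega)]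
          obtain ⟨j'', rfl⟩ : ∃ j'', j' = j'' + 1 := ⟨j' - 1, by omega⟩
          rw [List.getElem?_cons_succ, List.getElem?_cons_succ]
          exact htail0 j'' (by omega)
        · rw [Xlow s0 (by omega), List.getElem?_cons_succ]
          exact ha0
        · rw [Ylow t0 (by omega), List.getElem?_cons_succ]
          exact hb0
      · -- G2 : x low, y high (b ≤ t0)
        have hbt0 : b ≤ t0 := by omega
        have hcQ : List.IsChain (· ≤ ·) (lam :: vstar^[t0] y) := hbm t0 hbt0
        have hQne : vstar^[t0] y ≠ [] := by
          apply List.ne_nil_of_length_pos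
          rw [length_iter]; omega
        obtain ⟨hq, Q', hQd, hQv, hlq⟩ := cons_decomp hcQ hQne
        have hQM : Q' = vstar^[s0 + 1] x := by
          rw [← hQv, ← Function.iterate_succ_apply' vstar t0 y, ← heq0]
        have hQd2 : vstar^[t0] y = hq :: vstar^[s0 + 1] x := by rw [hQd, hQM]
        rcases eq_or_lt_of_le hlq with hlq' | hlq'
        · -- head of Q0 equals lam : merge at (s0, t0)
          have hYt0 : vstar^[t0] (lam :: y) = lam :: vstar^[t0] y := by
            rcases eq_or_lt_of_le hbt0 with hbe | hbl
            · rw [Ylow t0 (by omega)]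
            · obtain ⟨i, rfl⟩ : ∃ i, t0 = i + 1 := ⟨t0 - 1, by omega⟩
              rw [Yhigh i (by omega)]
              have hcW : List.IsChain (· ≤ ·) (lam :: vstar^[i] y) := hbm i (by omega)
              have hWne : vstar^[i] y ≠ [] := by
                apply List.ne_nil_of_length_pos
                rw [length_iter]; omega
              obtain ⟨w, W', hWd, hWv, hlw⟩ := cons_decomp hcW hWne
              have hW'Q : W' = vstar^[i + 1] y := by
                rw [← hWv, ← Function.iterate_succ_apply' vstar i y]
              have hwle : w ≤ hq := by
                have hcW2 : List.IsChain (· ≤ ·) (w :: W') := by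
                  rw [← hWd]; exact ((chain'_cons_iff _ _).1 hcW).1
                rw [hW'Q, hQd2] at hcW2
                exact ((chain'_cons_iff _ _).1 hcW2).2 hq (by simp)
              have hwlam : w = lam := le_antisymm (by rw [← hlq'] at hwle; exact hwle) hlw
              rw [hWd, hwlam, hW'Q]
          right
          refine ⟨n1, n2, s0, t0, ?_, BND, j0 + 1, ?_, ?_, a0, b0, ?_, ?_, hab0⟩
          · rw [Xlow _ hcx, Yhigh t0 hbt0, hQd2, ← hlq', heq0]
          · rw [Xlow s0 (by omega)]
            simp only [List.length_cons]
            omega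
          · intro j' hj'
            rw [Xlow s0 (by omega), hYt0]
            obtain ⟨j'', rfl⟩ : ∃ j'', j' = j'' + 1 := ⟨j' - 1, by omega⟩
            rw [List.getElem?_cons_succ, List.getElem?_cons_succ]
            exact htail0 j'' (by omega)
          · rw [Xlow s0 (by omega), List.getElem?_cons_succ]
            exact ha0
          · rw [hYt0, List.getElem?_cons_succ]
            exact hb0
        · -- head of Q0 is > lam : merge at (s0+1, t0+1)
          have hchM : List.IsChain (· ≤ ·) (lam :: vstar^[s0 + 1] x) := by
            rw [chain'_cons_iff]
            constructor
            · have h1' : List.IsChain (· ≤ ·) (vstar^[t0] y) := ((chain'_cons_iff _ _).1 hcQ).1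
              rw [hQd2] at h1'
              exact ((chain'_cons_iff _ _).1 h1').1
            · intro c hc
              apply ((chain'_cons_iff _ _).1 hcQ).2
              rw [hQd2]
              exact List.mem_cons_of_mem _ hc
          have haeq : a ≤ s0 + 1 := by
            by_contra hgt
            exact hamin (s0 + 1) (by omega) hchM
          right
          refine ⟨n1, n2, s0 + 1, t0 + 1, ?_, ?_, 0, ?_, ?_, lam, hq, ?_, ?_, hlq'⟩
          · rw [Xhigh (s0 + 1) (by omega), Yhigh (t0 + 1) (by omega), heq0]
          · intro s' t' h'
            rcases comboMin s' t' h' with ⟨h1', h2', hS⟩ | ⟨h1', h2', hZ, hS⟩ |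
              ⟨h1', h2', hZ, hS⟩ | ⟨h1', h2', hS⟩
            · have := hmin0 _ _ hS; omega
            · have hb' := hmin0 _ _ hS
              constructor
              · rcases eq_or_lt_of_le hb'.1 with he | hl
                · exfalso
                  rw [← he] at hZ
                  rcases eq_or_lt_of_le hb'.2 with he2 | hl2
                  · rw [← he2, hQd2] at hZ
                    have : hq = lam := by injection hZ
                    exact absurd this.symm (ne_of_lt hlq')
                  · have hlZ := congrArg List.length hZ
                    rw [length_iter] at hlZ
                    simp only [List.length_cons, length_iter] at hlZ
                    have hMl : x.length - (s0 + 1) = y.length - (t0 + 1) := by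
                      rw [← length_iter, heq0, length_iter]
                    omega
                · omega
              · rcases eq_or_lt_of_le hb'.2 with he2 | hl2
                · exfalso
                  rw [← he2, hQd2] at hZ
                  have : hq = lam := by injection hZ
                  exact absurd this.symm (ne_of_lt hlq')
                · omega
            · have := hmin0 _ _ hS; omega
            · have := H1 _ _ hS; omega
          · rw [Xlow (s0 + 1) hcx]
            simp
          · intro j' hj'
            rw [Xlow (s0 + 1) hcx, Yhigh t0 hbt0, hQd2]
            obtain ⟨j'', rfl⟩ : ∃ j'', j' = j'' + 1 := ⟨j' - 1, by omega⟩
            rw [List.getElem?_cons_succ, List.getElem?_cons_succ]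
          · rw [Xlow (s0 + 1) hcx, List.getElem?_cons_zero]
          · rw [Yhigh t0 hbt0, hQd2, List.getElem?_cons_zero]
    · -- a ≤ s0
      have hat0 : a ≤ s0 := by omega
      have hcP : List.IsChain (· ≤ ·) (lam :: vstar^[s0] x) := ham s0 hat0
      have hPne : vstar^[s0] x ≠ [] := by
        apply List.ne_nil_of_length_pos
        rw [length_iter]; omega
      obtain ⟨hp, P', hPd, hPv, hlp⟩ := cons_decomp hcP hPne
      have hPM : P' = vstar^[s0 + 1] x := by
        rw [← hPv, ← Function.iterate_succ_apply' vstar s0 x]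
      have hPd2 : vstar^[s0] x = hp :: vstar^[s0 + 1] x := by rw [hPd, hPM]
      rcases le_or_gt (t0 + 1) b with hcy | hcy
      · -- G3 : x high, y low
        rcases eq_or_lt_of_le hlp with hlp' | hlp'
        · -- hp = lam
          have hXs0 : vstar^[s0] (lam :: x) = lam :: vstar^[s0] x := by
            rcases eq_or_lt_of_le hat0 with hae | hal
            · rw [Xlow s0 (by omega)]
            · obtain ⟨i, rfl⟩ : ∃ i, s0 = i + 1 := ⟨s0 - 1, by omega⟩
              rw [Xhigh i (by omega)]
              have hcW : List.IsChain (· ≤ ·) (lam :: vstar^[i] x) := ham i (by omega)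
              have hWne : vstar^[i] x ≠ [] := by
                apply List.ne_nil_of_length_pos
                rw [length_iter]; omega
              obtain ⟨w, W', hWd, hWv, hlw⟩ := cons_decomp hcW hWne
              have hW'P : W' = vstar^[i + 1] x := by
                rw [← hWv, ← Function.iterate_succ_apply' vstar i x]
              have hwle : w ≤ hp := by
                have hcW2 : List.IsChain (· ≤ ·) (w :: W') := by
                  rw [← hWd]; exact ((chain'_cons_iff _ _).1 hcW).1
                rw [hW'P, hPd2] at hcW2
                exact ((chain'_cons_iff _ _).1 hcW2).2 hp (by simp)
              have hwlam : w = lam := le_antisymm (by rw [← hlp'] at hwle; exact hwle) hlw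
              rw [hWd, hwlam, hW'P]
          right
          refine ⟨n1, n2, s0, t0, ?_, BND, j0 + 1, ?_, ?_, a0, b0, ?_, ?_, hab0⟩
          · rw [Xhigh s0 hat0, Ylow _ hcy, hPd2, ← hlp', heq0]
          · rw [hXs0]
            simp only [List.length_cons]
            omega
          · intro j' hj'
            rw [hXs0, Ylow t0 (by omega)]
            obtain ⟨j'', rfl⟩ : ∃ j'', j' = j'' + 1 := ⟨j' - 1, by omega⟩
            rw [List.getElem?_cons_succ, List.getElem?_cons_succ]
            exact htail0 j'' (by omega)
          · rw [hXs0, List.getElem?_cons_succ]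
            exact ha0
          · rw [Ylow t0 (by omega), List.getElem?_cons_succ]
            exact hb0
        · -- hp > lam : impossible by lemmaW
          exfalso
          have hchP' : List.IsChain (· ≤ ·) (hp :: vstar^[s0 + 1] x) := by
            have := ((chain'_cons_iff _ _).1 hcP).1
            rwa [hPd2] at this
          have hQv' : vstar (vstar^[t0] y) = vstar^[s0 + 1] x := by
            rw [← Function.iterate_succ_apply' vstar t0 y, ← heq0]
          have hQne : vstar^[t0] y ≠ [] := by
            apply List.ne_nil_of_length_pos
            rw [length_iter]; omega
          rw [hPd2] at htail0 ha0
          obtain ⟨hchQ, q, hQd, hpq⟩ :=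
            lemmaW (vstar^[t0] y) (vstar^[s0 + 1] x) hp j0 hchP' hQv' hQne htail0 a0 b0 ha0
              hb0 hab0
          have hfin : List.IsChain (· ≤ ·) (lam :: vstar^[t0] y) := by
            rw [chain'_cons_iff]
            refine ⟨hchQ, ?_⟩
            intro c hc
            rw [hQd] at hc
            rcases List.mem_cons.1 hc with rfl | hc
            · exact le_of_lt (lt_trans hlp' hpq)
            · apply ((chain'_cons_iff _ _).1 hcP).2
              rw [hPd2]
              exact List.mem_cons_of_mem _ hc
          exact hbmin t0 (by omega) hfin
      · -- G4 : both high
        right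
        refine ⟨n1, n2, s0 + 1, t0 + 1, ?_, ?_, j0, ?_, ?_, a0, b0, ?_, ?_, hab0⟩
        · rw [Xhigh (s0 + 1) (by omega), Yhigh (t0 + 1) (by omega), heq0]
        · intro s' t' h'
          rcases comboMin s' t' h' with ⟨h1', h2', hS⟩ | ⟨h1', h2', hZ, hS⟩ |
            ⟨h1', h2', hZ, hS⟩ | ⟨h1', h2', hS⟩
          · have := hmin0 _ _ hS; omega
          · have := hmin0 _ _ hS; omega
          · have := hmin0 _ _ hS; omega
          · have := H1 _ _ hS; omega
        · rw [Xhigh s0 (by omega)]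
          exact hj0
        · intro j' hj'
          rw [Xhigh s0 (by omega), Yhigh t0 (by omega)]
          exact htail0 j' hj'
        · rw [Xhigh s0 (by omega)]
          exact ha0
        · rw [Yhigh t0 (by omega)]
          exact hb0

end VLessProofs


/-- Prepending the same letter on the left preserves (and reflects) V-order:
for distinct strings `x`, `y`, `x ≺ y ⟺ λx ≺ λy`. -/
theorem vless_cons_left_iff {α : Type*} [LinearOrder α]
    (x y : List α) (lam : α) (hxy : x ≠ y) :
    VLess x y ↔ VLess (lam :: x) (lam :: y) := by
  constructor
  · exact vless_cons_forward x y lam hxy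
  · intro hXY
    by_contra hn
    rcases vless_total x y hxy with h | h
    · exact hn h
    · exact vless_asymm (lam :: y) (lam :: x) (by simpa using Ne.symm hxy)
        (vless_cons_forward y x lam (Ne.symm hxy) h) hXY
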